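/- Suppose p and p′ are sibling tiles (i.e., the two tiles obtained by splitting a bitile into its lower and upper frequency halves), with common time interval I, and q is another tile with p < q. Then there exist constants c_{p,q} and c_{p′,q} with |c_{p,q}| = |c_{p′,q}| = (|I_q|/|I|)^{1/2} such that φ_p(x) = c_{p,q} 1_I(x) φ_q(x) and φ_{p′}(x) = c_{p′,q} |I|^{1/2} h_I(x) φ_q(x) for all x, where h_I is the Haar function associated with the dyadic interval I. -/
import Mathlib


open MeasureTheory Set
open scoped ENNReal NNReal Classical

noncomputable section
namespace Paper

/-- The Walsh functions `W_k`, supported on `[0,1)`. -/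
def walsh (k : ℕ) (x : ℝ) : ℝ :=
  if h : k = 0 then (if 0 ≤ x ∧ x < 1 then (1:ℝ) else 0)
  else walsh (k / 2) (2 * x) + (if k % 2 = 0 then (1:ℝ) else -1) * walsh (k / 2) (2 * x - 1)
termination_by k
decreasing_by all_goals exact Nat.div_lt_self (Nat.pos_of_ne_zero h) one_lt_two

/-- The dyadic interval `[2^j m, 2^j (m+1))`. -/
def dyadicI (j m : ℤ) : Set ℝ := Ico ((2:ℝ)^j * (m:ℝ)) ((2:ℝ)^j * ((m:ℝ)+1))

/-- A weight: positive a.e. and locally integrable. -/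
def IsWeight (w : ℝ → ℝ) : Prop :=
  (∀ᵐ x ∂(volume : Measure ℝ), 0 < w x) ∧ LocallyIntegrable w volume

/-- The measure `w(x) dx`. -/
def wMeasure (w : ℝ → ℝ) : Measure ℝ := volume.withDensity fun x => ENNReal.ofReal (w x)

/-- `[w]_{A_p} ≤ A` over dyadic intervals, for `1 < p`. -/
def ApBoundedBy (w : ℝ → ℝ) (p A : ℝ) : Prop :=
  ∀ j m : ℤ,
    ((2:ℝ)^(-j) * ∫ x in dyadicI j m, w x) *
      ((2:ℝ)^(-j) * ∫ x in dyadicI j m, w x ^ (-1/(p-1)))^(p-1) ≤ A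

/-- `[w]_{A_1} ≤ A` over dyadic intervals. -/
def A1BoundedBy (w : ℝ → ℝ) (A : ℝ) : Prop :=
  ∀ j m : ℤ,
    (2:ℝ)^(-j) * ∫ x in dyadicI j m, w x ≤ A * essInf w (volume.restrict (dyadicI j m))

/-- `w ∈ A_q` for `q ∈ [1,∞)`, covering also the case `q = 1`. -/
def MemAq (w : ℝ → ℝ) (q : ℝ) : Prop :=
  IsWeight w ∧ ((q = 1 ∧ ∃ A, A1BoundedBy w A) ∨ (1 < q ∧ ∃ A, ApBoundedBy w q A))

/-- `⟨f,g⟩ = ∫_0^1 f g`. -/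
def inner01 (f g : ℝ → ℝ) : ℝ := ∫ x in Ico (0:ℝ) 1, f x * g x

/-- Walsh--Fourier partial sums, `S_n f = 0` for `n < 0`. -/
def walshSum (f : ℝ → ℝ) (n : ℤ) (x : ℝ) : ℝ :=
  if n < 0 then 0
  else ∑ k ∈ Finset.range (n.toNat + 1), inner01 f (walsh k) * walsh k x

/-- Pointwise `r`-variation sup over all finite increasing integer sequences. -/
def varNormE (r : ℝ) (u : ℤ → ℝ) : ℝ≥0∞ :=
  ⨆ (M : ℕ) (N : Fin (M + 1) → ℤ) (_ : StrictMono N),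
    ENNReal.ofReal ((∑ j : Fin M, |u (N j.succ) - u (N j.castSucc)| ^ r) ^ (1 / r))

/-- A tile `[2^j m, 2^j (m+1)) × [2^{-j} n, 2^{-j}(n+1))`. -/
structure Tile where
  j : ℤ
  m : ℕ
  n : ℕ
deriving DecidableEq

namespace Tile
def timeI (p : Tile) : Set ℝ := Ico ((2:ℝ)^p.j * (p.m:ℝ)) ((2:ℝ)^p.j * ((p.m:ℝ)+1))
def freqI (p : Tile) : Set ℝ := Ico ((2:ℝ)^(-p.j) * (p.n:ℝ)) ((2:ℝ)^(-p.j) * ((p.n:ℝ)+1))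
def len (p : Tile) : ℝ := (2:ℝ)^p.j
def rect (p : Tile) : Set (ℝ × ℝ) := p.timeI ×ˢ p.freqI
/-- The order `p < q` on tiles: the tiles intersect and `I_p ⊆ I_q`. -/
def below (p q : Tile) : Prop := (p.rect ∩ q.rect).Nonempty ∧ p.timeI ⊆ q.timeI
/-- The Walsh packet of a tile. -/
def packet (p : Tile) (x : ℝ) : ℝ :=
  (2:ℝ) ^ (-(p.j:ℝ)/2) * walsh p.n ((2:ℝ)^(-p.j) * x - (p.m:ℝ))
end Tile

/-- A bitile `[2^j m, 2^j (m+1)) × [2^{1-j} n, 2^{1-j}(n+1))` (area 2). -/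
structure Bitile where
  j : ℤ
  m : ℕ
  n : ℕ
deriving DecidableEq

namespace Bitile
def timeI (P : Bitile) : Set ℝ := Ico ((2:ℝ)^P.j * (P.m:ℝ)) ((2:ℝ)^P.j * ((P.m:ℝ)+1))
def freqI (P : Bitile) : Set ℝ := Ico ((2:ℝ)^(1-P.j) * (P.n:ℝ)) ((2:ℝ)^(1-P.j) * ((P.n:ℝ)+1))
def len (P : Bitile) : ℝ := (2:ℝ)^P.j
def rect (P : Bitile) : Set (ℝ × ℝ) := P.timeI ×ˢ P.freqI
/-- The order `P < Q` on bitiles. -/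
def below (P Q : Bitile) : Prop := (P.rect ∩ Q.rect).Nonempty ∧ P.timeI ⊆ Q.timeI
/-- The lower tile `P_1`. -/
def lower (P : Bitile) : Tile := ⟨P.j, P.m, 2 * P.n⟩
/-- The upper tile `P_2`. -/
def upper (P : Bitile) : Tile := ⟨P.j, P.m, 2 * P.n + 1⟩
end Bitile

/-- A tree of bitiles with top `P_T`. -/
structure Tree where
  top : Bitile
  elems : Finset Bitile
  below_top : ∀ P ∈ elems, P.below top

/-- A tree is 2-overlapping if `P_2 < (P_T)_2` for all its members. -/
def Tree.TwoOverlapping (T : Tree) : Prop :=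
  ∀ P ∈ T.elems, (Bitile.upper P).below T.top.upper

/-- A tree is 1-overlapping if `P_1 < (P_T)_1` for all its members. -/
def Tree.OneOverlapping (T : Tree) : Prop :=
  ∀ P ∈ T.elems, (Bitile.lower P).below T.top.lower

/-- `⟨f, φ_p⟩`. -/
def pinner (f : ℝ → ℝ) (p : Tile) : ℝ := ∫ y, f y * p.packet y

/-- The tree square function `S_T f`. -/
def treeSq (f : ℝ → ℝ) (T : Tree) (x : ℝ) : ℝ :=
  Real.sqrt (∑ P ∈ T.elems,
    (pinner f P.lower)^2 * Set.indicator P.timeI (fun _ => (1:ℝ)) x / P.len)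

/-- The (weighted) size of a collection of bitiles: the least constant `C` with
`‖S_T f‖_{L²(w)} ≤ C w(I_T)^{1/2}` over all 2-overlapping trees in the collection,
realized as a supremum of ratios. -/
def size (w f : ℝ → ℝ) (Ps : Set Bitile) : ℝ≥0∞ :=
  ⨆ (T : Tree) (_ : (T.elems : Set Bitile) ⊆ Ps ∧ T.TwoOverlapping),
    eLpNorm (treeSq f T) 2 (wMeasure w) / (wMeasure w T.top.timeI) ^ (1/2 : ℝ)

/-- The coefficient `a_P(x)` built from linearizing data. -/
def coefP (M : ℝ → ℕ) (N : ℕ → ℝ → ℤ) (a : ℕ → ℝ → ℝ) (P : Bitile) (x : ℝ) : ℝ :=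
  ∑ j ∈ Finset.Icc 1 (M x),
    if ((N (j-1) x : ℝ)) ∉ P.freqI ∧ ((N j x : ℝ)) ∈ (Bitile.upper P).freqI then a j x else 0

/-- The (weighted) density of a collection of bitiles. -/
def density (w g : ℝ → ℝ) (r' : ℝ) (M : ℝ → ℕ) (N : ℕ → ℝ → ℤ) (a : ℕ → ℝ → ℝ)
    (Ps : Set Bitile) : ℝ≥0∞ :=
  ⨆ (P : Bitile) (_ : P ∈ Ps) (Q : Bitile) (_ : P.below Q),
    (ENNReal.ofReal (∫ x in Q.timeI,
        |g x| ^ r' * (∑ k ∈ Finset.Icc 1 (M x),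
          if ((N k x : ℝ)) ∈ Q.freqI then |a k x| ^ r' else 0) * w x)
      / wMeasure w Q.timeI) ^ (1/r')

/-- The bilinear form `B_Ps(f,g)`. -/
def bform (w f g : ℝ → ℝ) (M : ℝ → ℕ) (N : ℕ → ℝ → ℤ) (a : ℕ → ℝ → ℝ)
    (Ps : Finset Bitile) : ℝ :=
  ∑ P ∈ Ps, pinner f P.lower * ∫ x, P.lower.packet x * coefP M N a P x * g x * w x

/-- The linearized tree operator `C_T f`. -/
def treeOp (f : ℝ → ℝ) (M : ℝ → ℕ) (N : ℕ → ℝ → ℤ) (a : ℕ → ℝ → ℝ) (T : Tree) (x : ℝ) : ℝ :=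
  ∑ P ∈ T.elems, pinner f P.lower * P.lower.packet x * coefP M N a P x

/-- The Haar function of the dyadic interval `[2^j m, 2^j(m+1))`. -/
def haarFn (j m : ℤ) (x : ℝ) : ℝ :=
  if x ∈ Ico ((2:ℝ)^j * (m:ℝ)) ((2:ℝ)^j * ((m:ℝ) + 1/2)) then (2:ℝ) ^ (-(j:ℝ)/2)
  else if x ∈ Ico ((2:ℝ)^j * ((m:ℝ) + 1/2)) ((2:ℝ)^j * ((m:ℝ)+1)) then -(2:ℝ) ^ (-(j:ℝ)/2)
  else 0

/-- The martingale difference projection `Δ_j f` onto Haar functions at scale `2^{1-j}`. -/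
def haarProj (j : ℤ) (f : ℝ → ℝ) (x : ℝ) : ℝ :=
  ∑' m : ℤ, (∫ y, f y * haarFn (1-j) m y) * haarFn (1-j) m x

/-- The pointwise `r`-variation of the Haar martingale of `f`. -/
def varHaar (r : ℝ) (f : ℝ → ℝ) (x : ℝ) : ℝ≥0∞ :=
  ⨆ (M : ℕ) (N : Fin (M + 1) → ℤ) (_ : StrictMono N),
    ENNReal.ofReal ((∑ k : Fin M,
      |∑ j ∈ Finset.Ioc (N k.castSucc) (N k.succ), haarProj j f x| ^ r) ^ (1/r))

/-- The jump counting function `M_λ(x)`. -/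
def jumpCount (f : ℝ → ℝ) (lam : ℝ) (x : ℝ) : ℝ≥0∞ :=
  ⨆ (M : ℕ) (N : Fin (M + 1) → ℤ) (_ : StrictMono N),
    ((Finset.univ.filter (fun k : Fin M =>
      lam < |∑ j ∈ Finset.Ioc (N k.castSucc) (N k.succ), haarProj j f x|)).card : ℝ≥0∞)

/-- The square function of a finite collection of tiles. -/
def tileSq (f : ℝ → ℝ) (Ds : Finset Tile) (x : ℝ) : ℝ :=
  Real.sqrt (∑ p ∈ Ds, (pinner f p)^2 * Set.indicator p.timeI (fun _ => (1:ℝ)) x / p.len)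

/-- The dyadic sharp maximal function. -/
def sharpMax (g : ℝ → ℝ) (x : ℝ) : ℝ≥0∞ :=
  ⨆ (j : ℤ) (m : ℤ) (_ : x ∈ dyadicI j m),
    ⨅ c : ℝ, ENNReal.ofReal ((2:ℝ)^(-j) * ∫ y in dyadicI j m, |g y - c|)

/-- The dyadic `L²` maximal function `M_2`. -/
def M2fn (f : ℝ → ℝ) (x : ℝ) : ℝ≥0∞ :=
  ⨆ (j : ℤ) (m : ℤ) (_ : x ∈ dyadicI j m),
    ENNReal.ofReal (((2:ℝ)^(-j) * ∫ y in dyadicI j m, (f y)^2) ^ (1/2:ℝ))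

/-- The weak `L^{1,∞}(μ)` quasinorm. -/
def wkNorm (g : ℝ → ℝ) (μ : Measure ℝ) : ℝ≥0∞ :=
  ⨆ lam : ℝ, ENNReal.ofReal lam * μ {x | lam < |g x|}

lemma walsh_support : ∀ (k : ℕ) (y : ℝ), ¬(0 ≤ y ∧ y < 1) → walsh k y = 0 := by
  intro k
  induction k using Nat.strong_induction_on with
  | _ k ih =>
    intro y hy
    by_cases h : k = 0
    · rw [walsh]; simp [h, hy]
    · have hk := Nat.div_lt_self (Nat.pos_of_ne_zero h) one_lt_two
      have h1 : walsh (k/2) (2*y) = 0 := ih _ hk _ (by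
        rcases not_and_or.mp hy with h1|h1 <;> push_neg at h1 <;> rintro ⟨a,b⟩ <;> linarith)
      have h2 : walsh (k/2) (2*y-1) = 0 := ih _ hk _ (by
        rcases not_and_or.mp hy with h1|h1 <;> push_neg at h1 <;> rintro ⟨a,b⟩ <;> linarith)
      rw [walsh]; simp [h, h1, h2]

/-- The recursion holds for all `k` (including `k = 0`) in the halved form. -/
lemma walsh_rec (k : ℕ) (y : ℝ) :
    walsh k y = walsh (k/2) (2*y) + (if k % 2 = 0 then (1:ℝ) else -1) * walsh (k/2) (2*y-1) := by
  by_cases h : k = 0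
  · subst h
    simp only [Nat.zero_div, Nat.zero_mod, if_pos rfl, one_mul]
    by_cases hy : 0 ≤ y ∧ y < 1
    · by_cases hy2 : y < 1/2
      · have e1 : walsh 0 (2*y) = 1 := by rw [walsh]; simp; constructor <;> [linarith [hy.1]; linarith]
        have e2 : walsh 0 (2*y-1) = 0 := walsh_support _ _ (by rintro ⟨a,b⟩; linarith)
        have e0 : walsh 0 y = 1 := by rw [walsh]; simp [hy]
        rw [e0, e1, e2]; norm_num
      · have e1 : walsh 0 (2*y) = 0 := walsh_support _ _ (by rintro ⟨a,b⟩; linarith)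
        have e2 : walsh 0 (2*y-1) = 1 := by
          rw [walsh]; simp; constructor <;> [linarith; linarith [hy.2]]
        have e0 : walsh 0 y = 1 := by rw [walsh]; simp [hy]
        rw [e0, e1, e2]; norm_num
    · have e0 : walsh 0 y = 0 := walsh_support _ _ hy
      have e1 : walsh 0 (2*y) = 0 := walsh_support _ _ (by
        rcases not_and_or.mp hy with h1|h1 <;> push_neg at h1 <;> rintro ⟨a,b⟩ <;> linarith)
      have e2 : walsh 0 (2*y-1) = 0 := walsh_support _ _ (by
        rcases not_and_or.mp hy with h1|h1 <;> push_neg at h1 <;> rintro ⟨a,b⟩ <;> linarith)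
      rw [e0, e1, e2]; norm_num
  · rw [walsh]; simp [h]

/-- Sibling relation: `W_{2n+1} = sgn · W_{2n}`. -/
lemma walsh_sibling (n : ℕ) (y : ℝ) :
    walsh (2*n+1) y = (if y < 1/2 then (1:ℝ) else -1) * walsh (2*n) y := by
  have hodd := walsh_rec (2*n+1) y
  have heven := walsh_rec (2*n) y
  have d1 : (2*n+1)/2 = n := by omega
  have d2 : (2*n)/2 = n := by omega
  have m1 : ¬((2*n+1) % 2 = 0) := by omega
  have m2 : (2*n) % 2 = 0 := by omega
  rw [d1, if_neg m1] at hodd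
  rw [d2, if_pos m2] at heven
  by_cases hy : y < 1/2
  · have e2 : walsh n (2*y-1) = 0 := walsh_support _ _ (by rintro ⟨a,b⟩; linarith)
    rw [if_pos hy, hodd, heven, e2]; ring
  · have e1 : walsh n (2*y) = 0 := walsh_support _ _ (by push_neg at hy; rintro ⟨a,b⟩; linarith)
    rw [if_neg hy, hodd, heven, e1]; ring

/-- Core: `W_{n'/2^k}(2^k y - t)` is a signed cutoff of `W_{n'}(y)`. -/
lemma walsh_dilate : ∀ (k : ℕ) (n' t : ℕ), t < 2^k →
    ∃ c₀ : ℝ, (c₀ = 1 ∨ c₀ = -1) ∧ ∀ y : ℝ,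
      walsh (n' / 2^k) ((2:ℝ)^k * y - (t:ℝ)) =
      c₀ * (if 0 ≤ (2:ℝ)^k * y - (t:ℝ) ∧ (2:ℝ)^k * y - (t:ℝ) < 1 then (1:ℝ) else 0)
        * walsh n' y := by
  intro k
  induction k with
  | zero =>
    intro n' t ht
    interval_cases t
    refine ⟨1, Or.inl rfl, fun y => ?_⟩
    simp only [pow_zero, Nat.div_one, Nat.cast_zero, sub_zero, one_mul]
    by_cases hy : 0 ≤ y ∧ y < 1
    · rw [if_pos hy]; ring
    · rw [if_neg hy, walsh_support _ _ hy]; ring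
  | succ k ih =>
    intro n' t ht
    have hdd : n' / 2 ^ (k+1) = (n' / 2) / 2 ^ k := by
      rw [Nat.div_div_eq_div_mul, pow_succ']
    have hpow : (2:ℝ)^(k+1) = 2 * (2:ℝ)^k := by rw [pow_succ]; ring
    have hε : ((if n' % 2 = 0 then (1:ℝ) else -1) = 1 ∨ (if n' % 2 = 0 then (1:ℝ) else -1) = -1) := by
      split_ifs <;> simp
    set ε : ℝ := if n' % 2 = 0 then (1:ℝ) else -1 with hεdef
    have hε2 : ε * ε = 1 := by rcases hε with h | h <;> rw [h] <;> norm_num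
    by_cases hcase : t < 2^k
    · obtain ⟨c₀, hc₀, H⟩ := ih (n'/2) t hcase
      refine ⟨c₀, hc₀, fun y => ?_⟩
      have harg : (2:ℝ)^(k+1) * y - (t:ℝ) = (2:ℝ)^k * (2*y) - (t:ℝ) := by rw [hpow]; ring
      rw [hdd, harg, H (2*y)]
      by_cases hin : 0 ≤ (2:ℝ)^k * (2*y) - (t:ℝ) ∧ (2:ℝ)^k * (2*y) - (t:ℝ) < 1
      · rw [if_pos hin]
        have hy2 : 2 * y < 1 := by
          have h2k : (1:ℝ) ≤ (2:ℝ)^k := one_le_pow₀ one_le_two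
          have ht' : (t:ℝ) + 1 ≤ (2:ℝ)^k := by
            have : (t:ℕ) + 1 ≤ 2^k := hcase
            exact_mod_cast this
          nlinarith [hin.1, hin.2]
        have hz : walsh (n'/2) (2*y-1) = 0 :=
          walsh_support _ _ (by rintro ⟨a,b⟩; linarith)
        have := walsh_rec n' y
        rw [hz, mul_zero, add_zero] at this
        rw [← this]
      · rw [if_neg hin]; ring
    · have ht2 : t - 2^k < 2^k := by
        have : t < 2^(k+1) := ht
        rw [pow_succ] at this; omega
      obtain ⟨c₀, hc₀, H⟩ := ih (n'/2) (t - 2^k) ht2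
      refine ⟨ε * c₀, by rcases hε with h|h <;> rcases hc₀ with h'|h' <;> rw [h, h'] <;> norm_num,
        fun y => ?_⟩
      have hcast : ((t - 2^k : ℕ) : ℝ) = (t:ℝ) - (2:ℝ)^k := by
        push_cast [Nat.cast_sub (le_of_not_gt hcase)]; ring
      have harg : (2:ℝ)^(k+1) * y - (t:ℝ) = (2:ℝ)^k * (2*y-1) - ((t - 2^k : ℕ) : ℝ) := by
        rw [hcast, hpow]; ring
      rw [hdd, harg, H (2*y-1)]
      by_cases hin : 0 ≤ (2:ℝ)^k * (2*y-1) - (((t - 2^k:ℕ)):ℝ) ∧ (2:ℝ)^k * (2*y-1) - (((t - 2^k:ℕ)):ℝ) < 1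
      · rw [if_pos hin]
        have h2k : (1:ℝ) ≤ (2:ℝ)^k := one_le_pow₀ one_le_two
        have ht' : (2:ℝ)^k ≤ (t:ℝ) := by exact_mod_cast le_of_not_gt hcase
        have hy2 : (1:ℝ) ≤ 2 * y := by
          rw [hcast] at hin; nlinarith [hin.1]
        have hz : walsh (n'/2) (2*y) = 0 :=
          walsh_support _ _ (by rintro ⟨a,b⟩; linarith)
        have hr := walsh_rec n' y
        rw [hz] at hr
        have : walsh (n'/2) (2*y-1) = ε * walsh n' y := by
          rw [hr, ← hεdef]; rcases hε with h|h <;> rw [h] <;> ring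
        rw [this]; ring
      · rw [if_neg hin]; ring

set_option maxHeartbeats 1000000 in
lemma packet_below (p qt : Tile) (hpq : Tile.below p qt) :
    ∃ c : ℝ, |c| = (qt.len / p.len) ^ ((1:ℝ)/2) ∧
      ∀ x, p.packet x = c * Set.indicator p.timeI (fun _ => (1:ℝ)) x * qt.packet x := by
  obtain ⟨j, m, n⟩ := p
  obtain ⟨j₁, m₁, n₁⟩ := qt
  obtain ⟨⟨z, hz⟩, hsub⟩ := hpq
  simp only [Tile.rect, Tile.timeI, Tile.freqI, Set.mem_inter_iff, Set.mem_prod,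
    Set.mem_Ico] at hz hsub
  have h2j : (0:ℝ) < (2:ℝ)^(j:ℤ) := zpow_pos two_pos _
  have h2j₁ : (0:ℝ) < (2:ℝ)^(j₁:ℤ) := zpow_pos two_pos _
  have hne : ((2:ℝ)^(j:ℤ) * (m:ℝ)) < (2:ℝ)^(j:ℤ) * ((m:ℝ)+1) := by nlinarith
  rw [Set.Ico_subset_Ico_iff hne] at hsub
  obtain ⟨h1, h2⟩ := hsub
  have hjle : j ≤ j₁ := by
    rw [← zpow_le_zpow_iff_right₀ (a := (2:ℝ)) one_lt_two]
    nlinarith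
  set k : ℕ := (j₁ - j).toNat with hkdef
  have hk : (k:ℤ) = j₁ - j := Int.toNat_of_nonneg (by omega)
  -- 2^{-j} = 2^k * 2^{-j₁}
  have hv : (2:ℝ)^(-j:ℤ) = (2:ℝ)^(k:ℕ) * (2:ℝ)^(-j₁:ℤ) := by
    rw [← zpow_natCast (2:ℝ) k, hk, ← zpow_add₀ (two_ne_zero (α := ℝ))]
    congr 1; ring
  have hv' : (2:ℝ)^(j₁:ℤ) = (2:ℝ)^(k:ℕ) * (2:ℝ)^(j:ℤ) := by
    rw [← zpow_natCast (2:ℝ) k, hk, ← zpow_add₀ (two_ne_zero (α := ℝ))]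
    congr 1; ring
  have hvpos : (0:ℝ) < (2:ℝ)^(-j₁:ℤ) := zpow_pos two_pos _
  have h2kpos : (0:ℝ) < (2:ℝ)^(k:ℕ) := by positivity
  -- time inclusion in ℕ
  have hm1 : 2^k * m₁ ≤ m := by
    have : (2:ℝ)^(k:ℕ) * (m₁:ℝ) ≤ (m:ℝ) := by
      rw [hv'] at h1; nlinarith
    exact_mod_cast this
  have hm2 : m + 1 ≤ 2^k * (m₁ + 1) := by
    have : ((m:ℝ)+1) ≤ (2:ℝ)^(k:ℕ) * ((m₁:ℝ)+1) := by
      rw [hv'] at h2; nlinarith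
    exact_mod_cast this
  -- frequency relation in ℕ
  have hq1 : 2^k * n ≤ n₁ := by
    have hr : (2:ℝ)^(k:ℕ) * (n:ℝ) < (n₁:ℝ) + 1 := by
      have a1 := hz.1.2.1
      have a2 := hz.2.2.2
      rw [hv] at a1
      nlinarith
    have : (2^k * n : ℕ) < n₁ + 1 := by exact_mod_cast hr
    omega
  have hq2 : n₁ < 2^k * (n + 1) := by
    have hr : (n₁:ℝ) < (2:ℝ)^(k:ℕ) * ((n:ℝ)+1) := by
      have a1 := hz.2.2.1
      have a2 := hz.1.2.2
      rw [hv] at a2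
      nlinarith
    exact_mod_cast hr
  have hn : n₁ / 2^k = n := Nat.div_eq_of_lt_le (by linarith [hq1]) (by
    calc n₁ < 2^k * (n+1) := hq2
    _ = (n+1) * 2^k := by ring)
  have ht : m - 2^k * m₁ < 2^k := by
    have := hm2
    rw [Nat.mul_add, Nat.mul_one] at this
    omega
  obtain ⟨c₀, hc₀, H⟩ := walsh_dilate k n₁ (m - 2^k * m₁) ht
  refine ⟨c₀ * ((2:ℝ)^(k:ℕ)) ^ ((1:ℝ)/2), ?_, ?_⟩
  · have habs : |c₀| = 1 := by rcases hc₀ with h|h <;> rw [h] <;> norm_num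
    rw [abs_mul, habs, one_mul, abs_of_nonneg (Real.rpow_nonneg (le_of_lt h2kpos) _)]
    congr 1
    show (2:ℝ)^(k:ℕ) = (2:ℝ)^(j₁:ℤ) / (2:ℝ)^(j:ℤ)
    rw [← zpow_natCast (2:ℝ) k, hk, zpow_sub₀ (two_ne_zero (α := ℝ))]
  · intro x
    have hcast : ((m - 2^k*m₁ : ℕ) : ℝ) = (m:ℝ) - (2:ℝ)^(k:ℕ) * (m₁:ℝ) := by
      push_cast [Nat.cast_sub hm1]; ring
    have hA : (2:ℝ)^(-j:ℤ) * x - (m:ℝ)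
        = (2:ℝ)^(k:ℕ) * ((2:ℝ)^(-j₁:ℤ) * x - (m₁:ℝ)) - ((m - 2^k*m₁ : ℕ) : ℝ) := by
      rw [hcast, hv]; ring
    have hH := H ((2:ℝ)^(-j₁:ℤ) * x - (m₁:ℝ))
    rw [← hA] at hH
    have hmulinv : (2:ℝ)^(j:ℤ) * (2:ℝ)^(-j:ℤ) = 1 := by
      rw [← zpow_add₀ (two_ne_zero (α := ℝ)), show j + -j = 0 by ring, zpow_zero]
    have hinvmul : (2:ℝ)^(-j:ℤ) * (2:ℝ)^(j:ℤ) = 1 := by rw [mul_comm]; exact hmulinv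
    have h2jinv : (0:ℝ) < (2:ℝ)^(-j:ℤ) := zpow_pos two_pos _
    have he : (2:ℝ)^(j:ℤ)*((m:ℝ)+1) = (2:ℝ)^(j:ℤ)*(m:ℝ) + (2:ℝ)^(j:ℤ) := by ring
    have hind : (if 0 ≤ (2:ℝ)^(-j:ℤ) * x - (m:ℝ) ∧ (2:ℝ)^(-j:ℤ) * x - (m:ℝ) < 1
          then (1:ℝ) else 0)
        = Set.indicator (Ico ((2:ℝ)^(j:ℤ) * (m:ℝ)) ((2:ℝ)^(j:ℤ) * ((m:ℝ)+1)))
            (fun _ => (1:ℝ)) x := by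
      rw [Set.indicator_apply]
      refine if_congr ⟨?_, ?_⟩ rfl rfl
      · rintro ⟨a, b⟩
        have ha := mul_le_mul_of_nonneg_left a h2j.le
        rw [mul_zero, mul_sub, ← mul_assoc, hmulinv, one_mul] at ha
        have hb := mul_lt_mul_of_pos_left b h2j
        rw [mul_sub, ← mul_assoc, hmulinv, one_mul, mul_one] at hb
        exact ⟨by linarith, by linarith⟩
      · rintro ⟨a, b⟩
        have ha := mul_le_mul_of_nonneg_left a h2jinv.le
        rw [← mul_assoc, hinvmul, one_mul] at ha
        have hb := mul_lt_mul_of_pos_left b h2jinv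
        rw [he, mul_add, ← mul_assoc, hinvmul, one_mul] at hb
        exact ⟨by linarith, by linarith⟩
    have hS : (2:ℝ) ^ (-(j:ℝ)/2) = ((2:ℝ)^(k:ℕ)) ^ ((1:ℝ)/2) * (2:ℝ) ^ (-(j₁:ℝ)/2) := by
      rw [← Real.rpow_natCast 2 k, ← Real.rpow_mul (by norm_num : (0:ℝ) ≤ 2),
        ← Real.rpow_add two_pos]
      congr 1
      have hkr : (k:ℝ) = (j₁:ℝ) - (j:ℝ) := by exact_mod_cast hk
      rw [hkr]; ring
    show (2:ℝ) ^ (-(j:ℝ)/2) * walsh n ((2:ℝ)^(-j:ℤ) * x - (m:ℝ)) = _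
    simp only [Tile.timeI]
    rw [← hn, hH, hind, hS]
    show _ = _ * _ * ((2:ℝ) ^ (-(j₁:ℝ)/2) * walsh n₁ ((2:ℝ)^(-j₁:ℤ) * x - (m₁:ℝ)))
    ring

set_option maxHeartbeats 1000000 in
lemma haar_ind (j : ℤ) (m : ℕ) (x : ℝ) :
    ((2:ℝ)^(j:ℤ)) ^ ((1:ℝ)/2) * haarFn j (m:ℤ) x
      = Set.indicator (Ico ((2:ℝ)^(j:ℤ) * (m:ℝ)) ((2:ℝ)^(j:ℤ) * ((m:ℝ)+1))) (fun _ => (1:ℝ)) x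
        * (if (2:ℝ)^(-j:ℤ) * x - (m:ℝ) < 1/2 then (1:ℝ) else -1) := by
  have h2j : (0:ℝ) < (2:ℝ)^(j:ℤ) := zpow_pos two_pos _
  have h2jinv : (0:ℝ) < (2:ℝ)^(-j:ℤ) := zpow_pos two_pos _
  have hmulinv : (2:ℝ)^(j:ℤ) * (2:ℝ)^(-j:ℤ) = 1 := by
    rw [← zpow_add₀ (two_ne_zero (α := ℝ)), show j + -j = 0 by ring, zpow_zero]
  have hinvmul : (2:ℝ)^(-j:ℤ) * (2:ℝ)^(j:ℤ) = 1 := by rw [mul_comm]; exact hmulinv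
  have key : ∀ a : ℝ, (2:ℝ)^(-j:ℤ) * x < a ↔ x < (2:ℝ)^(j:ℤ) * a := by
    intro a
    constructor
    · intro h
      have := mul_lt_mul_of_pos_left h h2j
      rwa [← mul_assoc, hmulinv, one_mul] at this
    · intro h
      have := mul_lt_mul_of_pos_left h h2jinv
      rw [← mul_assoc, hinvmul, one_mul] at this
      linarith [this]
  have hpow : ((2:ℝ)^(j:ℤ)) ^ ((1:ℝ)/2) * (2:ℝ)^(-(j:ℝ)/2) = 1 := by
    rw [← Real.rpow_intCast 2 j, ← Real.rpow_mul (by norm_num : (0:ℝ) ≤ 2),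
      ← Real.rpow_add two_pos, show (j:ℝ)*((1:ℝ)/2) + (-(j:ℝ)/2) = 0 by ring, Real.rpow_zero]
  simp only [haarFn, Set.indicator_apply, Set.mem_Ico, Int.cast_natCast]
  by_cases hC : (2:ℝ)^(j:ℤ) * (m:ℝ) ≤ x ∧ x < (2:ℝ)^(j:ℤ) * ((m:ℝ)+1)
  · by_cases hD : x < (2:ℝ)^(j:ℤ) * ((m:ℝ) + 1/2)
    · have hu : (2:ℝ)^(-j:ℤ) * x - (m:ℝ) < 1/2 := by
        have := (key ((m:ℝ) + 1/2)).2 hD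
        linarith
      rw [if_pos ⟨hC.1, hD⟩, if_pos hC, if_pos hu, hpow]
      norm_num
    · push_neg at hD
      have hu : ¬ ((2:ℝ)^(-j:ℤ) * x - (m:ℝ) < 1/2) := by
        intro h
        have : (2:ℝ)^(-j:ℤ) * x < (m:ℝ) + 1/2 := by linarith
        exact absurd ((key _).1 this) (not_lt.2 hD)
      rw [if_neg (by rintro ⟨_, h⟩; linarith), if_pos ⟨hD, hC.2⟩, if_pos hC, if_neg hu]
      nlinarith [hpow]
  · have hhalf : (2:ℝ)^(j:ℤ) * ((m:ℝ) + 1/2) ≤ (2:ℝ)^(j:ℤ) * ((m:ℝ)+1) := by nlinarith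
    have hhalf2 : (2:ℝ)^(j:ℤ) * (m:ℝ) ≤ (2:ℝ)^(j:ℤ) * ((m:ℝ)+1/2) := by nlinarith
    rw [if_neg, if_neg, if_neg hC]
    · ring
    · rintro ⟨a, b⟩
      exact hC ⟨by linarith, b⟩
    · rintro ⟨a, b⟩
      exact hC ⟨a, by linarith⟩

/-- `φ_{P_2} = sgn · φ_{P_1}` pointwise. -/
lemma packet_sibling (P : Bitile) (x : ℝ) :
    (Bitile.upper P).packet x
      = (if (2:ℝ)^(-P.j:ℤ) * x - (P.m:ℝ) < 1/2 then (1:ℝ) else -1) * (Bitile.lower P).packet x := by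
  show (2:ℝ) ^ (-(P.j:ℝ)/2) * walsh (2*P.n+1) ((2:ℝ)^(-P.j:ℤ) * x - (P.m:ℝ)) = _
  rw [walsh_sibling]
  show _ = _ * ((2:ℝ) ^ (-(P.j:ℝ)/2) * walsh (2*P.n) ((2:ℝ)^(-P.j:ℤ) * x - (P.m:ℝ)))
  ring

/-- Lemma 2.1: if `p`, `p'` are sibling tiles with common time interval
`I` and `q` is a tile with `p < q`, then `φ_p = c_{p,q} 1_I φ_q` and
`φ_{p'} = c_{p',q} |I|^{1/2} h_I φ_q` with `|c_{p,q}| = |c_{p',q}| = (|I_q|/|I|)^{1/2}`. -/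
theorem walsh_to_haar (P : Bitile) (p p' : Tile)
    (hsib : (p = P.lower ∧ p' = P.upper) ∨ (p = P.upper ∧ p' = P.lower))
    (qt : Tile) (hpq : Tile.below p qt) :
    ∃ c c' : ℝ,
      |c| = (qt.len / P.len) ^ ((1:ℝ)/2) ∧ |c'| = (qt.len / P.len) ^ ((1:ℝ)/2) ∧
      (∀ x, p.packet x = c * Set.indicator P.timeI (fun _ => (1:ℝ)) x * qt.packet x) ∧
      (∀ x, p'.packet x = c' * P.len ^ ((1:ℝ)/2) * haarFn P.j (P.m : ℤ) x * qt.packet x) := by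
  obtain ⟨c, hcabs, hc⟩ := packet_below p qt hpq
  have hlen : p.len = P.len := by rcases hsib with ⟨rfl, _⟩ | ⟨rfl, _⟩ <;> rfl
  have htime : p.timeI = P.timeI := by rcases hsib with ⟨rfl, _⟩ | ⟨rfl, _⟩ <;> rfl
  refine ⟨c, c, by rw [← hlen]; exact hcabs, by rw [← hlen]; exact hcabs,
    fun x => by rw [hc x, htime], fun x => ?_⟩
  have hh := haar_ind P.j P.m x
  have hs2 : (if (2:ℝ)^(-P.j:ℤ) * x - (P.m:ℝ) < 1/2 then (1:ℝ) else -1)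
      * (if (2:ℝ)^(-P.j:ℤ) * x - (P.m:ℝ) < 1/2 then (1:ℝ) else -1) = 1 := by
    split_ifs <;> norm_num
  rcases hsib with ⟨rfl, rfl⟩ | ⟨rfl, rfl⟩
  · rw [packet_sibling P x, hc x, htime]
    simp only [Bitile.len, Bitile.timeI] at *
    linear_combination (-(c * qt.packet x)) * hh
  · have hlow : (Bitile.lower P).packet x
        = (if (2:ℝ)^(-P.j:ℤ) * x - (P.m:ℝ) < 1/2 then (1:ℝ) else -1)
          * (Bitile.upper P).packet x := by
      rw [packet_sibling P x, ← mul_assoc, hs2, one_mul]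
    rw [hlow, hc x, htime]
    simp only [Bitile.len, Bitile.timeI] at *
    linear_combination (-(c * qt.packet x)) * hh

end Paper
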